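/- Let A be an irreducible C*-subalgebra of B(H) in which every positive element has finite spectrum. Then every projection p ∈ A whose image has dimension at least 2 can be decomposed as p = p₀ + p₁ where p₀, p₁ ∈ A are nonzero mutually orthogonal projections. -/

import Mathlib

open Polynomial

private lemma aeval_mem_starSub {H : Type} [NormedAddCommGroup H] [InnerProductSpace ℂ H]
    [CompleteSpace H] (A : StarSubalgebra ℂ (H →L[ℂ] H)) (b : H →L[ℂ] H) (hb : b ∈ A)
    (P : ℝ[X]) : aeval b P ∈ A := by
  induction P using Polynomial.induction_on' with
  | add f g hf hg => rw [map_add]; exact add_mem hf hg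
  | monomial n c =>
    rw [Polynomial.aeval_monomial, Algebra.algebraMap_eq_smul_one]
    have : (c • (1 : H →L[ℂ] H)) = ((c : ℂ) • (1 : H →L[ℂ] H)) := by
      rw [Complex.coe_smul]
    rw [this]
    exact mul_mem (A.smul_mem (one_mem A) _) (pow_mem hb n)

private lemma aeval_eq_of_eqOn {H : Type} [NormedAddCommGroup H] [InnerProductSpace ℂ H]
    [CompleteSpace H] (b : H →L[ℂ] H) (hb : IsSelfAdjoint b) (P Q : ℝ[X])
    (h : ∀ x ∈ spectrum ℝ b, P.eval x = Q.eval x) :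
    aeval b P = aeval b Q := by
  rw [← cfc_polynomial P b, ← cfc_polynomial Q b]
  exact cfc_congr h

private lemma aeval_spectrum {H : Type} [NormedAddCommGroup H] [InnerProductSpace ℂ H]
    [CompleteSpace H] (b : H →L[ℂ] H) (hb : IsSelfAdjoint b) (P : ℝ[X]) :
    spectrum ℝ (aeval b P : H →L[ℂ] H) = P.eval '' spectrum ℝ b := by
  rw [← cfc_polynomial P b]
  exact cfc_map_spectrum _ _

private lemma aeval_isSelfAdjoint {H : Type} [NormedAddCommGroup H] [InnerProductSpace ℂ H]
    [CompleteSpace H] (b : H →L[ℂ] H) (hb : IsSelfAdjoint b) (P : ℝ[X]) :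
    IsSelfAdjoint (aeval b P : H →L[ℂ] H) := by
  rw [← cfc_polynomial P b]
  exact cfc_predicate _ _

set_option maxHeartbeats 1000000

/-- Let `A` be an irreducible C*-subalgebra of `B(H)` in which every positive
element has finite spectrum. Then every (self-adjoint) projection `p ∈ A` whose image has
dimension at least 2 decomposes as `p = p₀ + p₁` with `p₀, p₁ ∈ A` nonzero mutually orthogonal
projections. -/
theorem stmt2 {H : Type} [NormedAddCommGroup H] [InnerProductSpace ℂ H] [CompleteSpace H]
    (A : StarSubalgebra ℂ (H →L[ℂ] H)) (hclosed : IsClosed (A : Set (H →L[ℂ] H)))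
    (hirr : ∀ K : Submodule ℂ H, IsClosed (K : Set H) →
      (∀ a ∈ A, ∀ v ∈ K, a v ∈ K) → K = ⊥ ∨ K = ⊤)
    (hfin : ∀ a ∈ A, 0 ≤ a → (spectrum ℂ a).Finite)
    (p : H →L[ℂ] H) (hpA : p ∈ A) (hp_idem : IsIdempotentElem p) (hp_sa : IsSelfAdjoint p)
    (hrank : 2 ≤ Module.rank ℂ (LinearMap.range (p : H →ₗ[ℂ] H))) :
    ∃ p₀ p₁ : H →L[ℂ] H, p₀ ∈ A ∧ p₁ ∈ A ∧
      IsIdempotentElem p₀ ∧ IsSelfAdjoint p₀ ∧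
      IsIdempotentElem p₁ ∧ IsSelfAdjoint p₁ ∧
      p₀ ≠ 0 ∧ p₁ ≠ 0 ∧ p₀ * p₁ = 0 ∧ p₁ * p₀ = 0 ∧ p = p₀ + p₁ := by
  classical
  set Rg := LinearMap.range (p : H →ₗ[ℂ] H) with hRg
  have hp_fix : ∀ x ∈ Rg, p x = x := by
    rintro x ⟨y, rfl⟩
    have := congrArg (fun f : H →L[ℂ] H => f y) hp_idem
    simpa using this
  have hsym : ∀ x y : H, inner ℂ (p x) y = (inner ℂ x (p y) : ℂ) :=
    (ContinuousLinearMap.isSelfAdjoint_iff_isSymmetric.mp hp_sa)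
  have hrank1 : ¬ (Module.rank ℂ Rg ≤ 1) := by
    intro h
    have := le_trans hrank h
    norm_num at this
  -- a nonzero vector in the range
  obtain ⟨x0, hx0R, hx0⟩ : ∃ x : H, x ∈ Rg ∧ x ≠ 0 := by
    by_contra h
    push_neg at h
    apply hrank1
    rw [rank_le_one_iff]
    refine ⟨0, fun w => ⟨0, ?_⟩⟩
    have : (w : H) = 0 := h w w.2
    exact Subtype.ext (by simp [this])
  -- unit vector u
  set u : H := ‖x0‖⁻¹ • x0 with hu_def
  have hu_mem : u ∈ Rg := Rg.smul_mem _ hx0R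
  have hu_norm : ‖u‖ = 1 := by
    rw [hu_def, norm_smul]
    simp [norm_ne_zero_iff.mpr hx0]
  have huu : (inner ℂ u u : ℂ) = 1 := by
    rw [inner_self_eq_norm_sq_to_K, hu_norm]; norm_num
  -- a vector not a multiple of u
  obtain ⟨w, hw⟩ : ∃ w : Rg, ∀ r : ℂ, r • (⟨u, hu_mem⟩ : Rg) ≠ w := by
    by_contra h
    push_neg at h
    exact hrank1 (rank_le_one_iff.mpr ⟨⟨u, hu_mem⟩, fun w => h w⟩)
  set v : H := (w : H) - (inner ℂ u (w : H) : ℂ) • u with hv_def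
  have hv_mem : v ∈ Rg := sub_mem w.2 (Rg.smul_mem _ hu_mem)
  have hv_ne : v ≠ 0 := by
    intro h
    apply hw (inner ℂ u (w : H))
    apply Subtype.ext
    have : (w : H) = (inner ℂ u (w : H) : ℂ) • u := by
      have := sub_eq_zero.mp (hv_def ▸ h)
      exact this
    simpa using this.symm
  have huv : (inner ℂ u v : ℂ) = 0 := by
    rw [hv_def, inner_sub_right, inner_smul_right, huu]
    ring
  have hpu : p u = u := hp_fix u hu_mem
  have hpv : p v = v := hp_fix v hv_mem
  -- the orbit A v is dense
  set M : Submodule ℂ H :=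
    { carrier := {x | ∃ a ∈ A, a v = x}
      add_mem' := by
        rintro x y ⟨a, haA, rfl⟩ ⟨b, hbA, rfl⟩
        exact ⟨a + b, add_mem haA hbA, rfl⟩
      zero_mem' := ⟨0, zero_mem A, rfl⟩
      smul_mem' := by
        rintro z x ⟨a, haA, rfl⟩
        exact ⟨z • a, A.smul_mem haA z, rfl⟩ } with hM_def
  have hMinv : ∀ a ∈ A, ∀ x ∈ M.topologicalClosure, a x ∈ M.topologicalClosure := by
    intro a haA x hx
    have hmapsto : Set.MapsTo a (M : Set H) (M : Set H) := by
      rintro y ⟨b, hbA, rfl⟩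
      exact ⟨a * b, mul_mem haA hbA, rfl⟩
    exact hmapsto.closure a.continuous hx
  have hMtop : M.topologicalClosure = ⊤ := by
    rcases hirr M.topologicalClosure M.isClosed_topologicalClosure hMinv with h | h
    · exfalso
      have hvM : v ∈ M := ⟨p, hpA, hpv⟩
      have : v ∈ M.topologicalClosure := M.le_topologicalClosure hvM
      rw [h] at this
      exact hv_ne (by simpa using this)
    · exact h
  -- find a ∈ A with ⟪u, a v⟫ ≠ 0
  obtain ⟨a, haA, hav⟩ : ∃ a ∈ A, ‖a v - u‖ < 1 := by
    have hu_cl : u ∈ closure (M : Set H) := by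
      have : u ∈ M.topologicalClosure := by rw [hMtop]; trivial
      exact this
    rw [Metric.mem_closure_iff] at hu_cl
    obtain ⟨y, hyM, hy⟩ := hu_cl 1 one_pos
    obtain ⟨a, haA, rfl⟩ := hyM
    exact ⟨a, haA, by rwa [← dist_eq_norm, dist_comm]⟩
  have h_inner : (inner ℂ u (a v) : ℂ) ≠ 0 := by
    intro h0
    have h1 : (inner ℂ u (a v - u) : ℂ) = -1 := by
      rw [inner_sub_right, h0, huu]; ring
    have h2 : ‖(inner ℂ u (a v - u) : ℂ)‖ ≤ ‖u‖ * ‖a v - u‖ := norm_inner_le_norm _ _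
    rw [h1, hu_norm, one_mul] at h2
    simp only [norm_neg, norm_one] at h2
    linarith
  -- the compressed element c = p a p
  set c : H →L[ℂ] H := p * a * p with hc_def
  have hcA : c ∈ A := mul_mem (mul_mem hpA haA) hpA
  have hc_app : c v = p (a v) := by
    simp [hc_def, hpv, ContinuousLinearMap.mul_apply]
  have hc_inner : (inner ℂ u (c v) : ℂ) = inner ℂ u (a v) := by
    rw [hc_app, ← hsym u (a v), hpu]
  have hc_ns : ∀ z : ℂ, c ≠ z • p := by
    intro z hz
    apply h_inner
    rw [← hc_inner, hz]
    simp [hpv, huv, inner_smul_right]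
  have hstarc : star c = p * star a * p := by
    rw [hc_def, star_mul, star_mul, hp_sa.star_eq, mul_assoc]
  have hcpc : p * c * p = c := by
    rw [hc_def]
    calc p * (p * a * p) * p = (p * p) * a * (p * p) := by noncomm_ring
    _ = p * a * p := by rw [hp_idem]
  have hcpc' : p * star c * p = star c := by
    rw [hstarc]
    calc p * (p * star a * p) * p = (p * p) * star a * (p * p) := by noncomm_ring
    _ = p * star a * p := by rw [hp_idem]
  -- choose a self-adjoint non-scalar compression b
  set s : H →L[ℂ] H := c + star c with hs_def
  set t : H →L[ℂ] H := Complex.I • (star c - c) with ht_def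
  have hs_sa : IsSelfAdjoint s := by
    rw [IsSelfAdjoint, hs_def, star_add, star_star, add_comm]
  have ht_sa : IsSelfAdjoint t := by
    rw [IsSelfAdjoint, ht_def, star_smul, star_sub, star_star]
    simp only [Complex.star_def, Complex.conj_I, neg_smul, smul_sub]
    abel
  have hs_pbp : p * s * p = s := by
    rw [hs_def, mul_add, add_mul, hcpc, hcpc']
  have ht_pbp : p * t * p = t := by
    rw [ht_def, mul_smul_comm, smul_mul_assoc, mul_sub, sub_mul, hcpc, hcpc']
  have h2c : (2 : ℂ) • c = s + Complex.I • t := by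
    rw [hs_def, ht_def, smul_smul, Complex.I_mul_I, neg_one_smul, two_smul]
    abel
  obtain ⟨b, hbA, hb_sa, hb_pbp, hb_ns⟩ :
      ∃ b : H →L[ℂ] H, b ∈ A ∧ IsSelfAdjoint b ∧ p * b * p = b ∧ ∀ z : ℂ, b ≠ z • p := by
    by_cases hsb : ∀ z : ℂ, s ≠ z • p
    · exact ⟨s, add_mem hcA (star_mem hcA), hs_sa, hs_pbp, hsb⟩
    · push_neg at hsb
      obtain ⟨z₁, hz₁⟩ := hsb
      refine ⟨t, A.smul_mem (sub_mem (star_mem hcA) hcA) _, ht_sa, ht_pbp, ?_⟩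
      intro z₂ hz₂
      apply hc_ns ((2 : ℂ)⁻¹ * (z₁ + Complex.I * z₂))
      have : c = (2 : ℂ)⁻¹ • ((2 : ℂ) • c) := by
        rw [smul_smul]; norm_num
      rw [this, h2c, hz₁, hz₂]
      module
  -- the positive element b' = b + ‖b‖ • p
  set β : ℂ := (‖b‖ : ℂ) with hβ_def
  set b' : H →L[ℂ] H := b + β • p with hb'_def
  have hb'A : b' ∈ A := add_mem hbA (A.smul_mem hpA β)
  have hb'_sa : IsSelfAdjoint b' := by
    refine hb_sa.add ?_
    rw [IsSelfAdjoint, star_smul, hp_sa.star_eq, hβ_def]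
    simp [Complex.star_def, Complex.conj_ofReal]
  have hppp : p * p * p = p := by
    conv_lhs => rw [hp_idem.eq]
    exact hp_idem.eq
  have hb'_pbp : p * b' * p = b' := by
    rw [hb'_def, mul_add, add_mul, hb_pbp]
    congr 1
    rw [mul_smul_comm, smul_mul_assoc, hppp]
  have hb'p : b' * p = b' := by
    conv_lhs => rw [← hb'_pbp]
    calc p * b' * p * p = p * b' * (p * p) := by noncomm_ring
    _ = p * b' * p := by rw [hp_idem.eq]
    _ = b' := hb'_pbp
  have hpb' : p * b' = b' := by
    conv_lhs => rw [← hb'_pbp]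
    calc p * (p * b' * p) = (p * p) * b' * p := by noncomm_ring
    _ = p * b' * p := by rw [hp_idem.eq]
    _ = b' := hb'_pbp
  have hb'_ns : ∀ r : ℝ, b' ≠ ((r : ℂ)) • p := by
    intro r hr
    apply hb_ns ((r : ℂ) - β)
    have : b = b' - β • p := by rw [hb'_def]; abel
    rw [this, hr, sub_smul]
  -- positivity of b'
  have hb'_pos : (0 : H →L[ℂ] H) ≤ b' := by
    rw [ContinuousLinearMap.nonneg_iff_isPositive]
    refine ⟨ContinuousLinearMap.isSelfAdjoint_iff_isSymmetric.mp hb'_sa, fun x => ?_⟩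
    set y := p x with hy_def
    have h1 : (inner ℂ (b x) x : ℂ) = inner ℂ (b y) y := by
      conv_lhs => rw [← hb_pbp]
      simp only [ContinuousLinearMap.mul_apply]
      rw [hsym (b (p x)) x]
    have h2 : (inner ℂ (p x) x : ℂ) = inner ℂ y y := by
      have hpp : p x = p (p x) := (hp_fix (p x) ⟨x, rfl⟩).symm
      conv_lhs => rw [hpp]
      rw [hsym (p x) x]
    have hc2 : (inner ℂ y y : ℂ) = ((‖y‖ ^ 2 : ℝ) : ℂ) := by
      rw [inner_self_eq_norm_sq_to_K]
      exact (Complex.ofReal_pow _ _).symm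
    have h3 : b'.reApplyInnerSelf x = RCLike.re (inner ℂ (b y) y : ℂ) + ‖b‖ * ‖y‖ ^ 2 := by
      rw [ContinuousLinearMap.reApplyInnerSelf_apply, hb'_def]
      simp only [ContinuousLinearMap.add_apply, ContinuousLinearMap.smul_apply,
        inner_add_left, inner_smul_left]
      rw [h1, h2, hc2, map_add, hβ_def]
      congr 1
      rw [Complex.conj_ofReal, ← Complex.ofReal_mul, RCLike.re_to_complex, Complex.ofReal_re]
    rw [h3]
    have hbound : |RCLike.re (inner ℂ (b y) y : ℂ)| ≤ ‖b‖ * ‖y‖ ^ 2 := by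
      refine le_trans (RCLike.abs_re_le_norm _) ?_
      refine le_trans (norm_inner_le_norm _ _) ?_
      have := b.le_opNorm y
      nlinarith [norm_nonneg (b y), norm_nonneg y, norm_nonneg b]
    have := abs_le.mp hbound
    linarith
  -- finite spectrum
  have hfinC : (spectrum ℂ b').Finite := hfin b' hb'A hb'_pos
  have hfinR : (spectrum ℝ b').Finite := by
    have h := hb'_sa.spectrumRestricts.algebraMap_image
    refine Set.Finite.of_finite_image (f := algebraMap ℝ ℂ) ?_
      (fun x _ y _ hxy => by exact_mod_cast hxy)
    rw [h]; exact hfinC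
  -- spectral projections
  have hHnt : Nontrivial (H →L[ℂ] H) := by
    refine nontrivial_of_ne 0 1 fun h01 => hx0 ?_
    have := congrArg (fun f : H →L[ℂ] H => f x0) h01
    simpa using this.symm
  set S : Finset ℝ := hfinR.toFinset with hS_def
  set T : Finset ℝ := insert (0 : ℝ) S with hT_def
  have hinjT : Set.InjOn id (T : Set ℝ) := fun _ _ _ _ h => h
  have hspecT : ∀ x ∈ spectrum ℝ b', x ∈ T := by
    intro x hx
    rw [hT_def, Finset.mem_insert]
    right
    rw [hS_def]
    exact hfinR.mem_toFinset.mpr hx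
  set Q : ℝ → ℝ[X] := fun lam => Lagrange.basis T id lam with hQ_def
  set qq : ℝ → (H →L[ℂ] H) := fun lam => aeval b' (Q lam) with hqq_def
  have h_eval_self : ∀ lam ∈ T, (Q lam).eval lam = 1 := fun lam hlam =>
    Lagrange.eval_basis_self hinjT hlam
  have h_eval_ne : ∀ lam, ∀ x ∈ T, lam ≠ x → (Q lam).eval x = 0 := fun lam x hx hne =>
    Lagrange.eval_basis_of_ne (s := T) (v := id) hne hx
  -- key properties of the spectral projections
  have hq_mem : ∀ lam, qq lam ∈ A := fun lam => aeval_mem_starSub A b' hb'A _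
  have hq_sa : ∀ lam, IsSelfAdjoint (qq lam) := fun lam => aeval_isSelfAdjoint b' hb'_sa _
  have hq_idem : ∀ lam ∈ T, IsIdempotentElem (qq lam) := by
    intro lam hlam
    rw [IsIdempotentElem, hqq_def]
    simp only
    rw [← map_mul]
    apply aeval_eq_of_eqOn b' hb'_sa
    intro x hx
    have hxT := hspecT x hx
    rw [eval_mul]
    rcases eq_or_ne lam x with h | hne
    · rw [← h, h_eval_self lam hlam]; ring
    · rw [h_eval_ne lam x hxT hne]; ring
  have hq_orth : ∀ lam mu, lam ≠ mu → qq lam * qq mu = 0 := by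
    intro lam mu hne
    rw [hqq_def]
    simp only
    rw [← map_mul]
    have : aeval b' ((Q lam) * (Q mu)) = aeval b' (0 : ℝ[X]) := by
      apply aeval_eq_of_eqOn b' hb'_sa
      intro x hx
      have hxT := hspecT x hx
      rw [eval_mul, eval_zero]
      rcases eq_or_ne lam x with h | hne'
      · have hmux : mu ≠ x := fun hmu => hne (h.trans hmu.symm)
        rw [h_eval_ne mu x hxT hmux]; ring
      · rw [h_eval_ne lam x hxT hne']; ring
    rw [this, map_zero]
  have hq_p : ∀ lam ∈ T, lam ≠ 0 → qq lam * p = qq lam ∧ p * qq lam = qq lam := by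
    intro lam hlam hlam0
    have h0T : (0 : ℝ) ∈ T := by simp [hT_def]
    have hdvd : X ∣ Q lam := by
      rw [Polynomial.X_dvd_iff, Polynomial.coeff_zero_eq_eval_zero]
      exact h_eval_ne lam 0 h0T hlam0
    obtain ⟨R, hR⟩ := hdvd
    constructor
    · have : qq lam = aeval b' R * b' := by
        rw [hqq_def]; simp only
        rw [hR, mul_comm X R, map_mul, Polynomial.aeval_X]
      rw [this, mul_assoc, hb'p]
    · have : qq lam = b' * aeval b' R := by
        rw [hqq_def]; simp only
        rw [hR, map_mul, Polynomial.aeval_X]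
      rw [this, ← mul_assoc, hpb']
  have hq_ne0 : ∀ lam ∈ S, qq lam ≠ 0 := by
    intro lam hlamS h0
    have hlam_spec : lam ∈ spectrum ℝ b' := by
      rwa [hS_def, Set.Finite.mem_toFinset] at hlamS
    have hlamT : lam ∈ T := by simp [hT_def, hlamS]
    have h1 : (1 : ℝ) ∈ spectrum ℝ (qq lam) := by
      rw [hqq_def]
      simp only
      rw [aeval_spectrum b' hb'_sa]
      exact ⟨lam, hlam_spec, h_eval_self lam hlamT⟩
    rw [h0, spectrum.zero_eq] at h1
    simp at h1
  -- main case split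
  by_cases hcase : ∃ lam ∈ S, lam ≠ 0 ∧ qq lam ≠ p
  · obtain ⟨lam, hlamS, hlam0, hlamp⟩ := hcase
    have hlamT : lam ∈ T := by simp [hT_def, hlamS]
    set q := qq lam with hq_def
    obtain ⟨hqp, hpq⟩ := hq_p lam hlamT hlam0
    have hq_id : IsIdempotentElem q := hq_idem lam hlamT
    refine ⟨q, p - q, hq_mem lam, sub_mem hpA (hq_mem lam), hq_id, hq_sa lam, ?_, ?_,
      hq_ne0 lam hlamS, sub_ne_zero.mpr (Ne.symm hlamp), ?_, ?_, ?_⟩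
    · rw [IsIdempotentElem, mul_sub, sub_mul, sub_mul, hqp, hpq, hq_id, hp_idem]
      abel
    · exact hp_sa.sub (hq_sa lam)
    · rw [mul_sub, hqp, hq_id, sub_self]
    · rw [sub_mul, hpq, hq_id, sub_self]
    · abel
  · exfalso
    push_neg at hcase
    have hall : ∀ lam ∈ S, lam ≠ 0 → qq lam = p := hcase
    -- b' = (∑ of eigenvalues) • p : contradiction with non-scalarity
    have hb'_eq : b' = aeval b' (Lagrange.interpolate T id id) := by
      have h := aeval_eq_of_eqOn b' hb'_sa X (Lagrange.interpolate T id id) ?_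
      · rw [← h, Polynomial.aeval_X]
      · intro x hx
        rw [Polynomial.eval_X]
        exact (Lagrange.eval_interpolate_at_node id hinjT (hspecT x hx)).symm
    have hsum : aeval b' (Lagrange.interpolate T id id)
        = ∑ mu ∈ T, algebraMap ℝ (H →L[ℂ] H) mu * qq mu := by
      rw [Lagrange.interpolate_apply, map_sum]
      refine Finset.sum_congr rfl fun mu hmu => ?_
      rw [map_mul, Polynomial.aeval_C]
      rfl
    have hterm : ∀ mu ∈ T, algebraMap ℝ (H →L[ℂ] H) mu * qq mu = mu • p := by
      intro mu hmu
      rcases eq_or_ne mu 0 with rfl | hmu0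
      · simp
      · have hmuS : mu ∈ S := by
          rcases Finset.mem_insert.mp hmu with h | h
          · exact absurd h hmu0
          · exact h
        rw [hall mu hmuS hmu0, Algebra.algebraMap_eq_smul_one, smul_mul_assoc, one_mul]
    have : b' = (∑ mu ∈ T, mu) • p := by
      rw [hb'_eq, hsum, Finset.sum_congr rfl hterm, ← Finset.sum_smul]
    apply hb'_ns (∑ mu ∈ T, mu)
    rw [this, Complex.coe_smul]
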